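/- Let F be a singular foliation on a manifold M, let (V, t_V, s_V) be a bisubmersion for F in the sense of Androulidakis–Skandalis, and let p : U → V be a smooth submersion from a manifold U. Then (U, t_V ∘ p, s_V ∘ p) is again a bisubmersion for F in the sense of Androulidakis–Skandalis. -/

import Mathlib

open Manifold Topology Function Set

noncomputable section

/-- Rough vector fields on a manifold `M`: sections of the tangent bundle. -/
abbrev VectorFieldOn {E H : Type*} [NormedAddCommGroup E] [NormedSpace ℝ E]
    [TopologicalSpace H] (I : ModelWithCorners ℝ E H)
    (M : Type*) [TopologicalSpace M] [ChartedSpace H M] : Type _ :=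
  ∀ x : M, TangentSpace I x

section Defs

variable {E H : Type*} [NormedAddCommGroup E] [NormedSpace ℝ E] [TopologicalSpace H]
  (I : ModelWithCorners ℝ E H)
  {M : Type*} [TopologicalSpace M] [ChartedSpace H M] [IsManifold I (⊤ : ℕ∞) M]

/-- A vector field is smooth iff it is a smooth section of the tangent bundle. -/
def IsSmoothVF (X : VectorFieldOn I M) : Prop :=
  ContMDiff I I.tangent (⊤ : ℕ∞) (fun x => (⟨x, X x⟩ : TangentBundle I M))

/-- A vector field is smooth on a subset `O` iff the corresponding section of the
tangent bundle is smooth on `O`. -/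
def IsSmoothVFOn (X : VectorFieldOn I M) (O : Set M) : Prop :=
  ContMDiffOn I I.tangent (⊤ : ℕ∞) (fun x => (⟨x, X x⟩ : TangentBundle I M)) O

/-- The support of a vector field: the closure of the set where it is nonzero. -/
def suppVF (X : VectorFieldOn I M) : Set M := closure {x : M | X x ≠ 0}

/-- A vector field is compactly supported iff its support is compact. -/
def IsCptSuppVF (X : VectorFieldOn I M) : Prop := IsCompact (suppVF I X)

/-- A real valued function on a manifold is smooth. -/
def IsSmoothFn (f : M → ℝ) : Prop := ContMDiff I 𝓘(ℝ) (⊤ : ℕ∞) f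

/-- `f ∈ C_c^∞(M)`: `f` is smooth and compactly supported. -/
def IsCcFn (f : M → ℝ) : Prop := IsSmoothFn I f ∧ HasCompactSupport f

/-- `𝔛_c(M)`: the set of compactly supported smooth vector fields on `M`. -/
def XC : Set (VectorFieldOn I M) := {X | IsSmoothVF I X ∧ IsCptSuppVF I X}

/-- `F` is a `C^∞(M)`-submodule of `𝔛_c(M)`: a set of compactly supported smooth
vector fields closed under addition and under multiplication by smooth functions. -/
structure IsCinftySubmodule (F : Set (VectorFieldOn I M)) : Prop where
  subset_XC : F ⊆ XC I
  add_mem : ∀ X ∈ F, ∀ Y ∈ F, (fun x => X x + Y x) ∈ F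
  smul_mem : ∀ f : M → ℝ, IsSmoothFn I f → ∀ X ∈ F, (fun x => f x • X x) ∈ F

/-- `X` is a finite `C_c^∞(M)`-linear combination of elements of `S`. -/
def IsCcSpan (S : Set (VectorFieldOn I M)) (X : VectorFieldOn I M) : Prop :=
  ∃ (k : ℕ) (g : Fin k → M → ℝ) (Y : Fin k → VectorFieldOn I M),
    (∀ i, IsCcFn I (g i)) ∧ (∀ i, Y i ∈ S) ∧ ∀ x, X x = ∑ i, g i x • Y i x

/-- `𝒢` is a generating set for the module `F`: the elements of `𝒢` are smooth vector
fields, `g • Y ∈ F` for every `g ∈ C_c^∞(M)` and `Y ∈ 𝒢`, and every element of `F` is a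
finite `C_c^∞(M)`-linear combination of elements of `𝒢`. -/
structure IsGeneratingSet (F 𝒢 : Set (VectorFieldOn I M)) : Prop where
  smooth : ∀ Y ∈ 𝒢, IsSmoothVF I Y
  smul_mem : ∀ g : M → ℝ, IsCcFn I g → ∀ Y ∈ 𝒢, (fun x => g x • Y x) ∈ F
  spans : ∀ X ∈ F, IsCcSpan I 𝒢 X

/-- The sum of two sets of vector fields. -/
def setAddVF (S T : Set (VectorFieldOn I M)) : Set (VectorFieldOn I M) :=
  {X | ∃ A ∈ S, ∃ B ∈ T, ∀ x, X x = A x + B x}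

/-- The module `F` is locally finitely generated: each point has an open neighbourhood
`O` carrying finitely many vector fields, smooth on `O`, such that every element of `F`
supported in `O` coincides on `O` with a `C_c^∞(O)`-linear combination of them. -/
def LocallyFinGen (F : Set (VectorFieldOn I M)) : Prop :=
  ∀ x : M, ∃ O : Set M, IsOpen O ∧ x ∈ O ∧
    ∃ (k : ℕ) (Y : Fin k → VectorFieldOn I M),
      (∀ i, IsSmoothVFOn I (Y i) O) ∧
      ∀ X ∈ F, suppVF I X ⊆ O →
        ∃ g : Fin k → M → ℝ, (∀ i, IsCcFn I (g i) ∧ tsupport (g i) ⊆ O) ∧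
          ∀ x' ∈ O, X x' = ∑ i, g i x' • Y i x'

variable {E' H' : Type*} [NormedAddCommGroup E'] [NormedSpace ℝ E'] [TopologicalSpace H']
  (I' : ModelWithCorners ℝ E' H')
  {N : Type*} [TopologicalSpace N] [ChartedSpace H' N] [IsManifold I' (⊤ : ℕ∞) N]

/-- `Z` is `φ`-related to `Y` : `dφ_u (Z u) = Y (φ u)` for all `u`. -/
def IsPhiRelated (φ : M → N) (Z : VectorFieldOn I M) (Y : VectorFieldOn I' N) : Prop :=
  ∀ u, mfderiv I I' φ u (Z u) = Y (φ u)

/-- `φ` is a submersion: its differential is surjective at every point. -/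
def IsSubmersion (φ : M → N) : Prop := ∀ u, Surjective (mfderiv I I' φ u)

/-- `Γ_c(ker dφ)`: the compactly supported smooth vector fields killed by `dφ`. -/
def KerGammaC (φ : M → N) : Set (VectorFieldOn I M) :=
  {X | X ∈ XC I ∧ ∀ u, mfderiv I I' φ u (X u) = 0}

/-- The pullback module `φ⁻¹(F)` of a module of vector fields under a smooth map. -/
def PullbackModule (φ : M → N) (F : Set (VectorFieldOn I' N)) :
    Set (VectorFieldOn I M) :=
  {X | X ∈ XC I ∧ ∃ (k : ℕ) (f : Fin k → M → ℝ) (Y : Fin k → VectorFieldOn I' N),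
    (∀ i, IsCcFn I (f i)) ∧ (∀ i, Y i ∈ F) ∧
    ∀ u, mfderiv I I' φ u (X u) = ∑ i, f i u • Y i (φ u)}

end Defs

section Lie

variable {n : ℕ} {M : Type*} [TopologicalSpace M]
  [ChartedSpace (EuclideanSpace ℝ (Fin n)) M] [IsManifold (𝓡 n) (⊤ : ℕ∞) M]

/-- The expression of a vector field in the chart around `x₀` (the pullback of `X`
under the inverse of the extended chart at `x₀`). -/
def chartPushVF (x₀ : M) (X : VectorFieldOn (𝓡 n) M)
    (v : EuclideanSpace ℝ (Fin n)) : EuclideanSpace ℝ (Fin n) :=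
  (mfderiv (𝓡 n) (𝓡 n) ((extChartAt (𝓡 n) x₀).symm) v).inverse
    (X ((extChartAt (𝓡 n) x₀).symm v))

/-- The Lie bracket of two vector fields on a manifold, computed in the chart around
the given point (as for `VectorField.mlieBracket` in Mathlib). -/
def mlie (X Y : VectorFieldOn (𝓡 n) M) : VectorFieldOn (𝓡 n) M := fun x₀ =>
  (mfderiv (𝓡 n) (𝓡 n) (extChartAt (𝓡 n) x₀) x₀).inverse
    (show TangentSpace (𝓡 n) (extChartAt (𝓡 n) x₀ x₀) from
      (VectorField.lieBracket ℝ (chartPushVF x₀ X) (chartPushVF x₀ Y)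
        (extChartAt (𝓡 n) x₀ x₀) : EuclideanSpace ℝ (Fin n)))

/-- A singular foliation on a manifold: an involutive, locally finitely generated
`C^∞(M)`-submodule of `𝔛_c(M)`. -/
structure IsSingularFoliation (F : Set (VectorFieldOn (𝓡 n) M)) : Prop where
  submodule : IsCinftySubmodule (𝓡 n) F
  involutive : ∀ X ∈ F, ∀ Y ∈ F, mlie X Y ∈ F
  locFinGen : LocallyFinGen (𝓡 n) F

end Lie

section MoreDefs

variable {E H : Type*} [NormedAddCommGroup E] [NormedSpace ℝ E] [TopologicalSpace H]
  (I : ModelWithCorners ℝ E H)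
  {M : Type*} [TopologicalSpace M] [ChartedSpace H M] [IsManifold I (⊤ : ℕ∞) M]
  {E' H' : Type*} [NormedAddCommGroup E'] [NormedSpace ℝ E'] [TopologicalSpace H']
  (I' : ModelWithCorners ℝ E' H')
  {N : Type*} [TopologicalSpace N] [ChartedSpace H' N] [IsManifold I' (⊤ : ℕ∞) N]

/-- The global hull of a module of compactly supported vector fields: the smooth vector
fields `X` such that `g • X` belongs to the module for every `g ∈ C_c^∞(M)`. -/
def GlobalHull (F : Set (VectorFieldOn I M)) : Set (VectorFieldOn I M) :=
  {X | IsSmoothVF I X ∧ ∀ g : M → ℝ, IsCcFn I g → (fun x => g x • X x) ∈ F}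

/-- `X` is `f`-projectable, with (necessarily unique, when `f` is surjective)
projection the smooth vector field `Y`. -/
def ProjectableTo (f : M → N) (X : VectorFieldOn I M) (Y : VectorFieldOn I' N) : Prop :=
  IsSmoothVF I' Y ∧ IsPhiRelated I I' f X Y

/-- The pushforward `f_*(F)`: all finite `C_c^∞(N)`-linear combinations of projections
`f_* X` of `f`-projectable elements `X` of the global hull of `F`. -/
def PushforwardModule (f : M → N) (F : Set (VectorFieldOn I M)) :
    Set (VectorFieldOn I' N) :=
  {W | IsCcSpan I' {Y | ∃ X ∈ GlobalHull I F, ProjectableTo I I' f X Y} W}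

end MoreDefs

section PairDefs

variable {n : ℕ} {M : Type*} [TopologicalSpace M]
  [ChartedSpace (EuclideanSpace ℝ (Fin n)) M] [IsManifold (𝓡 n) (⊤ : ℕ∞) M]

/-- The right-invariant extension `→X` of a vector field `X` on `M` to the pair
groupoid `M × M`, namely `(x, y) ↦ (X x, 0)`. -/
def rightInvVF (X : VectorFieldOn (𝓡 n) M) :
    VectorFieldOn ((𝓡 n).prod (𝓡 n)) (M × M) :=
  fun p => (show TangentSpace ((𝓡 n).prod (𝓡 n)) p from ((X p.1, 0) :
    EuclideanSpace ℝ (Fin n) × EuclideanSpace ℝ (Fin n)))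

/-- The left-invariant extension `←X` of a vector field `X` on `M` to the pair
groupoid `M × M`, namely `(x, y) ↦ (0, X y)`. -/
def leftInvVF (X : VectorFieldOn (𝓡 n) M) :
    VectorFieldOn ((𝓡 n).prod (𝓡 n)) (M × M) :=
  fun p => (show TangentSpace ((𝓡 n).prod (𝓡 n)) p from ((0, X p.2) :
    EuclideanSpace ℝ (Fin n) × EuclideanSpace ℝ (Fin n)))

/-- `→F`: the `C_c^∞(M × M)`-span of the vector fields `→X`, `X ∈ F`. -/
def rightInvModule (F : Set (VectorFieldOn (𝓡 n) M)) :
    Set (VectorFieldOn ((𝓡 n).prod (𝓡 n)) (M × M)) :=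
  {W | IsCcSpan ((𝓡 n).prod (𝓡 n)) {W' | ∃ X ∈ F, W' = rightInvVF X} W}

/-- `←F`: the `C_c^∞(M × M)`-span of the vector fields `←X`, `X ∈ F`. -/
def leftInvModule (F : Set (VectorFieldOn (𝓡 n) M)) :
    Set (VectorFieldOn ((𝓡 n).prod (𝓡 n)) (M × M)) :=
  {W | IsCcSpan ((𝓡 n).prod (𝓡 n)) {W' | ∃ X ∈ F, W' = leftInvVF X} W}

end PairDefs

/-- `(U, tU, sU)` is a bisubmersion for `F` in the sense of Androulidakis–Skandalis:
`tU` and `sU` are smooth submersions to `M` and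
`tU⁻¹(F) = Γ_c(ker dtU) + Γ_c(ker dsU) = sU⁻¹(F)`. -/
structure IsASBisubmersion {n k : ℕ} {M U : Type*}
    [TopologicalSpace M] [ChartedSpace (EuclideanSpace ℝ (Fin n)) M]
    [IsManifold (𝓡 n) (⊤ : ℕ∞) M]
    [TopologicalSpace U] [ChartedSpace (EuclideanSpace ℝ (Fin k)) U]
    [IsManifold (𝓡 k) (⊤ : ℕ∞) U]
    (F : Set (VectorFieldOn (𝓡 n) M)) (tU sU : U → M) : Prop where
  smooth_t : ContMDiff (𝓡 k) (𝓡 n) (⊤ : ℕ∞) tU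
  smooth_s : ContMDiff (𝓡 k) (𝓡 n) (⊤ : ℕ∞) sU
  subm_t : IsSubmersion (𝓡 k) (𝓡 n) tU
  subm_s : IsSubmersion (𝓡 k) (𝓡 n) sU
  pullback_t : PullbackModule (𝓡 k) (𝓡 n) tU F
    = setAddVF (𝓡 k) (KerGammaC (𝓡 k) (𝓡 n) tU) (KerGammaC (𝓡 k) (𝓡 n) sU)
  pullback_s : PullbackModule (𝓡 k) (𝓡 n) sU F
    = setAddVF (𝓡 k) (KerGammaC (𝓡 k) (𝓡 n) tU) (KerGammaC (𝓡 k) (𝓡 n) sU)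

set_option linter.unusedSectionVars false

section VFAlgebra

variable {E H : Type*} [NormedAddCommGroup E] [NormedSpace ℝ E] [TopologicalSpace H]
  {I : ModelWithCorners ℝ E H}
  {M : Type*} [TopologicalSpace M] [ChartedSpace H M] [IsManifold I (⊤ : ℕ∞) M]

theorem isSmoothVF_zero : IsSmoothVF I (fun _ : M => (0 : E)) :=
  Bundle.contMDiff_zeroSection ℝ (TangentSpace I)

theorem IsSmoothVF.add {X Y : VectorFieldOn I M} (hX : IsSmoothVF I X) (hY : IsSmoothVF I Y) :
    IsSmoothVF I (fun x => X x + Y x) := by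
  intro x₀
  have hs := hX x₀
  have ht := hY x₀
  rw [Bundle.contMDiffAt_section] at hs ht ⊢
  set e := trivializationAt E (TangentSpace I) x₀
  refine (hs.add ht).congr_of_eventuallyEq ?_
  refine Filter.eventually_of_mem (e.open_baseSet.mem_nhds <|
    FiberBundle.mem_baseSet_trivializationAt E (TangentSpace I) x₀) ?_
  intro x hx
  apply (e.linear ℝ hx).1

theorem IsSmoothVF.smul {f : M → ℝ} {X : VectorFieldOn I M} (hf : IsSmoothFn I f)
    (hX : IsSmoothVF I X) : IsSmoothVF I (fun x => f x • X x) := by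
  intro x₀
  have hs := hX x₀
  rw [Bundle.contMDiffAt_section] at hs ⊢
  set e := trivializationAt E (TangentSpace I) x₀
  refine ((hf x₀).smul hs).congr_of_eventuallyEq ?_
  refine Filter.eventually_of_mem (e.open_baseSet.mem_nhds <|
    FiberBundle.mem_baseSet_trivializationAt E (TangentSpace I) x₀) ?_
  intro x hx
  apply (e.linear ℝ hx).2

theorem isSmoothVF_sum {ι : Type*} (s : Finset ι) (X : ι → VectorFieldOn I M)
    (h : ∀ i ∈ s, IsSmoothVF I (X i)) :
    IsSmoothVF I (fun x => ∑ i ∈ s, X i x) := by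
  classical
  induction s using Finset.induction with
  | empty => simp only [Finset.sum_empty]; exact isSmoothVF_zero
  | @insert a s hni ih =>
      simp only [Finset.sum_insert hni]
      exact (h a (Finset.mem_insert_self a s)).add
        (ih fun i hi => h i (Finset.mem_insert_of_mem hi))

theorem suppVF_smul_subset_tsupport (f : M → ℝ) (X : VectorFieldOn I M) :
    suppVF I (fun x => f x • X x) ⊆ tsupport f := by
  apply closure_mono
  intro x hx
  simp only [Set.mem_setOf_eq] at hx
  by_contra hfx
  have : f x = 0 := Function.notMem_support.mp hfx
  rw [this, zero_smul] at hx
  exact hx rfl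

theorem suppVF_smul_subset_tsupport' (f : M → ℝ) (X : VectorFieldOn I M) :
    suppVF I (fun x => f x • X x) ⊆ tsupport f :=
  suppVF_smul_subset_tsupport f X

theorem suppVF_add_subset (X Y : VectorFieldOn I M) :
    suppVF I (fun x => X x + Y x) ⊆ suppVF I X ∪ suppVF I Y := by
  have : IsClosed (suppVF I X ∪ suppVF I Y) := isClosed_closure.union isClosed_closure
  rw [suppVF, ← this.closure_eq]
  apply closure_mono
  intro x hx
  simp only [Set.mem_setOf_eq] at hx
  by_contra hc
  rw [Set.mem_union] at hc
  push_neg at hc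
  obtain ⟨h1, h2⟩ := hc
  have hX : X x = 0 := by
    by_contra h; exact h1 (subset_closure h)
  have hY : Y x = 0 := by
    by_contra h; exact h2 (subset_closure h)
  rw [hX, hY, add_zero] at hx
  exact hx rfl

theorem suppVF_sum_subset {ι : Type*} (s : Finset ι) (X : ι → VectorFieldOn I M) :
    suppVF I (fun x => ∑ i ∈ s, X i x) ⊆ s.sup (fun i => suppVF I (X i)) := by
  classical
  have hcl : IsClosed (s.sup (fun i => suppVF I (X i))) := by
    induction s using Finset.induction with
    | empty => simp
    | @insert a s hni ih => simpa [Finset.sup_insert] using (show IsClosed (suppVF I (X a)) from isClosed_closure).union ih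
  rw [suppVF, ← hcl.closure_eq]
  apply closure_mono
  intro x hx
  simp only [Set.mem_setOf_eq] at hx
  by_contra hc
  apply hx
  have : ∀ i ∈ s, X i x = 0 := by
    intro i hi
    by_contra h
    exact hc (Finset.le_sup (f := fun i => suppVF I (X i)) hi (subset_closure h))
  exact Finset.sum_eq_zero this

theorem IsCptSuppVF.of_subset {X : VectorFieldOn I M} {K : Set M}
    (hK : IsCompact K) (h : suppVF I X ⊆ K) : IsCptSuppVF I X :=
  hK.of_isClosed_subset isClosed_closure h

theorem xc_zero : (fun _ : M => (0 : E)) ∈ XC I :=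
  ⟨isSmoothVF_zero, by
    have : suppVF I (fun _ : M => (0 : E)) = ∅ := by
      simp [suppVF]
      ext x; exact ⟨fun hx => hx rfl, fun h => h.elim⟩
    show IsCompact (suppVF I (fun _ : M => (0 : E))); rw [this]; exact isCompact_empty⟩

theorem xc_add {X Y : VectorFieldOn I M} (hX : X ∈ XC I) (hY : Y ∈ XC I) :
    (fun x => X x + Y x) ∈ XC I :=
  ⟨hX.1.add hY.1, IsCptSuppVF.of_subset (hX.2.union hY.2) (suppVF_add_subset X Y)⟩

theorem xc_smul {f : M → ℝ} {X : VectorFieldOn I M} (hf : IsCcFn I f) (hX : IsSmoothVF I X) :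
    (fun x => f x • X x) ∈ XC I :=
  ⟨hX.smul (hf := hf.1), IsCptSuppVF.of_subset hf.2 (suppVF_smul_subset_tsupport f X)⟩

theorem xc_sum {ι : Type*} (s : Finset ι) (X : ι → VectorFieldOn I M)
    (h : ∀ i ∈ s, X i ∈ XC I) : (fun x => ∑ i ∈ s, X i x) ∈ XC I := by
  classical
  refine ⟨isSmoothVF_sum s X fun i hi => (h i hi).1, ?_⟩
  have hK : IsCompact (s.sup (fun i => suppVF I (X i))) := by
    induction s using Finset.induction with
    | empty => simp [isCompact_empty]
    | @insert a s hni ih =>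
        simp only [Finset.sup_insert]
        exact ((h a (Finset.mem_insert_self a s)).2).union
          (ih fun i hi => h i (Finset.mem_insert_of_mem hi))
  exact IsCptSuppVF.of_subset hK (suppVF_sum_subset s X)

end VFAlgebra
section Bridge

variable {E H : Type*} [NormedAddCommGroup E] [NormedSpace ℝ E] [TopologicalSpace H]
  {I : ModelWithCorners ℝ E H}
  {M : Type*} [TopologicalSpace M] [ChartedSpace H M] [IsManifold I (⊤ : ℕ∞) M]
  {E' H' : Type*} [NormedAddCommGroup E'] [NormedSpace ℝ E'] [TopologicalSpace H']
  {I' : ModelWithCorners ℝ E' H'}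
  {M' : Type*} [TopologicalSpace M'] [ChartedSpace H' M'] [IsManifold I' (⊤ : ℕ∞) M']
  {EJ HJ : Type*} [NormedAddCommGroup EJ] [NormedSpace ℝ EJ] [TopologicalSpace HJ]
  {J : ModelWithCorners ℝ EJ HJ}
  {N : Type*} [TopologicalSpace N] [ChartedSpace HJ N] [IsManifold J (⊤ : ℕ∞) N]

theorem triv_snd_eq_tcc (x₀ : M) (z : TangentBundle I M) :
    (trivializationAt E (TangentSpace I) x₀ z).2 = tangentCoordChange I z.1 x₀ z.1 z.2 :=
  rfl

theorem tcc_cancel_left {x z : M} (hz : z ∈ (extChartAt I x).source) (v : E) :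
    tangentCoordChange I z x z (tangentCoordChange I x z z v) = v := by
  rw [tangentCoordChange_comp (w := x) (x := z) (y := x) (z := z)
    ⟨⟨hz, mem_extChartAt_source (I := I) z⟩, hz⟩, tangentCoordChange_self hz]

theorem tcc_cancel_right {x z : M} (hz : z ∈ (extChartAt I x).source) (v : E) :
    tangentCoordChange I x z z (tangentCoordChange I z x z v) = v := by
  rw [tangentCoordChange_comp (w := z) (x := x) (y := z) (z := z)
    ⟨⟨mem_extChartAt_source (I := I) z, hz⟩, mem_extChartAt_source (I := I) z⟩,
    tangentCoordChange_self (mem_extChartAt_source (I := I) z)]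

theorem contMDiffAt_tcc_of_sectionAlong {q : N → M} {W : ∀ u : N, TangentSpace I (q u)} {u₀ : N}
    (h : ContMDiffAt J (I.prod 𝓘(ℝ, E)) (⊤ : ℕ∞)
      (fun u => (⟨q u, W u⟩ : TangentBundle I M)) u₀) :
    ContMDiffAt J 𝓘(ℝ, E) (⊤ : ℕ∞) (fun u => tangentCoordChange I (q u) (q u₀) (q u) (W u)) u₀ :=
  (Bundle.contMDiffAt_totalSpace.mp h).2

theorem sectionAlong_of_contMDiffAt {q : N → M} {W : ∀ u : N, TangentSpace I (q u)} {u₀ : N}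
    (hq : ContMDiffAt J I (⊤ : ℕ∞) q u₀)
    (h : ContMDiffAt J 𝓘(ℝ, E) (⊤ : ℕ∞) (fun u => tangentCoordChange I (q u) (q u₀) (q u) (W u)) u₀) :
    ContMDiffAt J (I.prod 𝓘(ℝ, E)) (⊤ : ℕ∞) (fun u => (⟨q u, W u⟩ : TangentBundle I M)) u₀ :=
  Bundle.contMDiffAt_totalSpace.mpr ⟨hq, h⟩

theorem contMDiffAt_tangentCoordChange (x₀ v₁ : M) (hv₁ : v₁ ∈ (chartAt H x₀).source) :
    ContMDiffAt I 𝓘(ℝ, E →L[ℝ] E) (⊤ : ℕ∞) (tangentCoordChange I x₀ v₁) v₁ := by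
  haveI : (tangentBundleCore I M).IsContMDiff I (⊤ : ℕ∞) := by
    have : IsManifold I (((⊤ : ℕ∞) : WithTop ℕ∞) + 1) M := by simpa
    exact tangentBundleCore.isContMDiff
  have h := (tangentBundleCore I M).contMDiffOn_coordChange (IB := I) (n := (⊤ : ℕ∞))
    (achart H x₀) (achart H v₁)
  refine h.contMDiffAt ?_
  have : (tangentBundleCore I M).baseSet (achart H x₀) ∩
      (tangentBundleCore I M).baseSet (achart H v₁) = (chartAt H x₀).source ∩
      (chartAt H v₁).source := rfl
  rw [this]
  exact (((chartAt H x₀).open_source).inter ((chartAt H v₁).open_source)).mem_nhds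
    ⟨hv₁, mem_chart_source H v₁⟩

theorem isSmoothVFAt_of_coords {x₀ v₁ : M} {O : Set M} (hO : IsOpen O)
    (hOsub : O ⊆ (chartAt H x₀).source) (hv₁ : v₁ ∈ O)
    {w : M → E} (hw : ContMDiffAt I 𝓘(ℝ, E) (⊤ : ℕ∞) w v₁)
    {X : VectorFieldOn I M} (hX : ∀ v ∈ O, X v = tangentCoordChange I x₀ v v (w v)) :
    ContMDiffAt I (I.prod 𝓘(ℝ, E)) (⊤ : ℕ∞) (fun v => (⟨v, X v⟩ : TangentBundle I M)) v₁ := by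
  rw [Bundle.contMDiffAt_section]
  have hcc : ContMDiffAt I 𝓘(ℝ, E →L[ℝ] E) (⊤ : ℕ∞) (tangentCoordChange I x₀ v₁) v₁ :=
    contMDiffAt_tangentCoordChange x₀ v₁ (hOsub hv₁)
  have hmain : ContMDiffAt I 𝓘(ℝ, E) (⊤ : ℕ∞) (fun v => tangentCoordChange I x₀ v₁ v (w v)) v₁ :=
    hcc.clm_apply hw
  refine hmain.congr_of_eventuallyEq ?_
  filter_upwards [hO.mem_nhds hv₁,
    (chartAt H v₁).open_source.mem_nhds (mem_chart_source H v₁)] with v hvO hvsrc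
  have h1 : v ∈ (extChartAt I x₀).source := by
    rw [extChartAt_source]; exact hOsub hvO
  have h2 : v ∈ (extChartAt I v₁).source := by
    rw [extChartAt_source]; exact hvsrc
  rw [triv_snd_eq_tcc, hX v hvO,
    tangentCoordChange_comp (w := x₀) (x := v) (y := v₁) (z := v)
      ⟨⟨h1, mem_extChartAt_source (I := I) v⟩, h2⟩]

theorem inTangentCoordinates_mfderiv_self {f : M → M'} {x₀ : M} :
    inTangentCoordinates I I' id f (mfderiv I I' f) x₀ x₀ = mfderiv I I' f x₀ := by
  ext v
  rw [inTangentCoordinates_eq (f := id) (g := f) (ϕ := mfderiv I I' f)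
    (mem_chart_source H x₀) (mem_chart_source H' (f x₀))]
  show tangentCoordChange I' (f x₀) (f x₀) (f x₀)
    (mfderiv I I' f x₀ (tangentCoordChange I x₀ x₀ x₀ v)) = _
  rw [tangentCoordChange_self (mem_extChartAt_source (I := I) x₀)]
  exact tangentCoordChange_self (mem_extChartAt_source (I := I') (f x₀))

theorem inTangentCoordinates_mfderiv_apply {f : M → M'} {x₀ x : M}
    (hx : x ∈ (chartAt H x₀).source) (hfx : f x ∈ (chartAt H' (f x₀)).source) (w : E) :
    inTangentCoordinates I I' id f (mfderiv I I' f) x₀ x w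
      = tangentCoordChange I' (f x) (f x₀) (f x)
        (mfderiv I I' f x (tangentCoordChange I x₀ x x w)) := by
  rw [inTangentCoordinates_eq (f := id) (g := f) (ϕ := mfderiv I I' f) hx hfx]
  rfl

end Bridge
section RightInverse

variable {F G : Type*} [NormedAddCommGroup F] [NormedSpace ℝ F] [NormedAddCommGroup G]
  [NormedSpace ℝ G] [FiniteDimensional ℝ F] [FiniteDimensional ℝ G]
  {EJ HJ : Type*} [NormedAddCommGroup EJ] [NormedSpace ℝ EJ] [TopologicalSpace HJ]
  {J : ModelWithCorners ℝ EJ HJ}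
  {N : Type*} [TopologicalSpace N] [ChartedSpace HJ N] [IsManifold J (⊤ : ℕ∞) N]

theorem exists_smooth_right_inverse {D : N → F →L[ℝ] G} {u₀ : N} {OD : Set N}
    (hOD : IsOpen OD) (hu₀ : u₀ ∈ OD)
    (hD : ∀ u ∈ OD, ContMDiffAt J 𝓘(ℝ, F →L[ℝ] G) (⊤ : ℕ∞) D u)
    (hsurj : Surjective (D u₀)) :
    ∃ (O : Set N) (σ : N → G →L[ℝ] F), IsOpen O ∧ u₀ ∈ O ∧ O ⊆ OD ∧
      (∀ u ∈ O, ContMDiffAt J 𝓘(ℝ, G →L[ℝ] F) (⊤ : ℕ∞) σ u) ∧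
      (∀ u ∈ O, ∀ w, D u (σ u w) = w) := by
  haveI : CompleteSpace G := FiniteDimensional.complete ℝ G
  obtain ⟨σ₀lin, hσ₀⟩ := (D u₀).toLinearMap.exists_rightInverse_of_surjective
    (LinearMap.range_eq_top.2 hsurj)
  set σ₀ : G →L[ℝ] F := LinearMap.toContinuousLinearMap σ₀lin with hσ₀def
  set g : N → G →L[ℝ] G := fun u => (D u).comp σ₀ with hgdef
  have hgsm : ∀ u ∈ OD, ContMDiffAt J 𝓘(ℝ, G →L[ℝ] G) (⊤ : ℕ∞) g u := fun u hu =>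
    (hD u hu).clm_comp contMDiffAt_const
  have hg1 : g u₀ = 1 := by
    ext w
    have := LinearMap.ext_iff.mp hσ₀ w
    simpa [hgdef, hσ₀def] using this
  set O : Set N := {u ∈ OD | IsUnit (g u)} with hOdef
  have hO : IsOpen O := by
    rw [isOpen_iff_mem_nhds]
    rintro u ⟨huD, huU⟩
    have hc : ContinuousAt g u := ((hgsm u huD).continuousAt)
    have h1 : {u | IsUnit (g u)} ∈ 𝓝 u := hc.preimage_mem_nhds (Units.isOpen.mem_nhds huU)
    have h2 : OD ∈ 𝓝 u := hOD.mem_nhds huD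
    filter_upwards [h1, h2] with v h1 h2
    exact ⟨h2, h1⟩
  refine ⟨O, fun u => σ₀.comp (Ring.inverse (g u)), hO, ⟨hu₀, by rw [hg1]; exact isUnit_one⟩,
    fun u hu => hu.1, ?_, ?_⟩
  · rintro u ⟨huD, huU⟩
    have hinv : ContMDiffAt J 𝓘(ℝ, G →L[ℝ] G) (⊤ : ℕ∞) (fun v => Ring.inverse (g v)) u := by
      have h1 : ContDiffAt ℝ ((⊤ : ℕ∞) : WithTop ℕ∞) Ring.inverse (g u) := by
        obtain ⟨gu, hgu⟩ := huU
        rw [← hgu]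
        exact contDiffAt_ringInverse ℝ gu
      exact ContDiffAt.comp_contMDiffAt (g := Ring.inverse) (f := g) h1 (hgsm u huD)
    exact contMDiffAt_const.clm_comp hinv
  · rintro u ⟨huD, huU⟩ w
    have : (D u).comp (σ₀.comp (Ring.inverse (g u))) = (g u) * (Ring.inverse (g u)) := by
      rw [ContinuousLinearMap.mul_def, hgdef, ContinuousLinearMap.comp_assoc]
    have h2 : (D u) ((σ₀.comp (Ring.inverse (g u))) w) = ((g u) * Ring.inverse (g u)) w := by
      rw [← this]; rfl
    rw [h2, Ring.mul_inverse_cancel _ huU, ContinuousLinearMap.one_apply]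

end RightInverse

section MFDerivSmooth

variable {E H : Type*} [NormedAddCommGroup E] [NormedSpace ℝ E] [TopologicalSpace H]
  {I : ModelWithCorners ℝ E H}
  {M : Type*} [TopologicalSpace M] [ChartedSpace H M] [IsManifold I (⊤ : ℕ∞) M]
  {EJ HJ : Type*} [NormedAddCommGroup EJ] [NormedSpace ℝ EJ] [TopologicalSpace HJ]
  {J : ModelWithCorners ℝ EJ HJ}
  {N : Type*} [TopologicalSpace N] [ChartedSpace HJ N] [IsManifold J (⊤ : ℕ∞) N]

theorem contMDiffAt_tangentCoordChange' (x y v₁ : M)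
    (hv : v₁ ∈ (chartAt H x).source ∩ (chartAt H y).source) :
    ContMDiffAt I 𝓘(ℝ, E →L[ℝ] E) (⊤ : ℕ∞) (tangentCoordChange I x y) v₁ := by
  haveI : (tangentBundleCore I M).IsContMDiff I (⊤ : ℕ∞) := by
    have : IsManifold I (((⊤ : ℕ∞) : WithTop ℕ∞) + 1) M := by simpa
    exact tangentBundleCore.isContMDiff
  have h := (tangentBundleCore I M).contMDiffOn_coordChange (IB := I) (n := (⊤ : ℕ∞)) (achart H x) (achart H y)
  refine h.contMDiffAt ?_
  have heq : (tangentBundleCore I M).baseSet (achart H x) ∩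
      (tangentBundleCore I M).baseSet (achart H y)
      = (chartAt H x).source ∩ (chartAt H y).source := rfl
  rw [heq]
  exact (((chartAt H x).open_source).inter ((chartAt H y).open_source)).mem_nhds hv

theorem contMDiffAt_inTangentCoordinates_mfderiv {q : N → M} (hq : ContMDiff J I (⊤ : ℕ∞) q) (u₀ : N)
    {u₁ : N} (hu₁ : u₁ ∈ (chartAt HJ u₀).source) (hqu₁ : q u₁ ∈ (chartAt H (q u₀)).source) :
    ContMDiffAt J 𝓘(ℝ, EJ →L[ℝ] E) (⊤ : ℕ∞) (inTangentCoordinates J I id q (mfderiv J I q) u₀) u₁ := by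
  have hD₁ : ContMDiffAt J 𝓘(ℝ, EJ →L[ℝ] E) (⊤ : ℕ∞)
      (inTangentCoordinates J I id q (mfderiv J I q) u₁) u₁ :=
    (hq u₁).mfderiv_const (by simp)
  have hc1 : ContMDiffAt J 𝓘(ℝ, E →L[ℝ] E) (⊤ : ℕ∞) (fun u => tangentCoordChange I (q u₁) (q u₀) (q u)) u₁ :=
    (contMDiffAt_tangentCoordChange' (q u₁) (q u₀) (q u₁)
      ⟨mem_chart_source H (q u₁), hqu₁⟩).comp u₁ (hq u₁)
  have hc2 : ContMDiffAt J 𝓘(ℝ, EJ →L[ℝ] EJ) (⊤ : ℕ∞) (tangentCoordChange J u₀ u₁) u₁ :=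
    contMDiffAt_tangentCoordChange' u₀ u₁ u₁ ⟨hu₁, mem_chart_source HJ u₁⟩
  refine ((hc1.clm_comp (hD₁.clm_comp hc2)).congr_of_eventuallyEq ?_)
  have hqc : ContinuousAt q u₁ := (hq u₁).continuousAt
  filter_upwards [(chartAt HJ u₀).open_source.mem_nhds hu₁,
    (chartAt HJ u₁).open_source.mem_nhds (mem_chart_source HJ u₁),
    hqc.preimage_mem_nhds ((chartAt H (q u₀)).open_source.mem_nhds hqu₁),
    hqc.preimage_mem_nhds ((chartAt H (q u₁)).open_source.mem_nhds (mem_chart_source H (q u₁)))]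
    with u h0 h1 hq0 hq1
  ext w
  have e0 : u ∈ (extChartAt J u₀).source := by rwa [extChartAt_source]
  have e1 : u ∈ (extChartAt J u₁).source := by rwa [extChartAt_source]
  have f0 : q u ∈ (extChartAt I (q u₀)).source := by rwa [extChartAt_source]
  have f1 : q u ∈ (extChartAt I (q u₁)).source := by rwa [extChartAt_source]
  rw [inTangentCoordinates_mfderiv_apply h0 hq0]
  show _ = tangentCoordChange I (q u₁) (q u₀) (q u)
      ((inTangentCoordinates J I id q (mfderiv J I q) u₁ u) (tangentCoordChange J u₀ u₁ u w))
  erw [inTangentCoordinates_mfderiv_apply h1 hq1,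
    tangentCoordChange_comp (w := u₀) (x := u₁) (y := u) (z := u)
      ⟨⟨e0, e1⟩, mem_extChartAt_source (I := J) u⟩,
    tangentCoordChange_comp (w := q u) (x := q u₁) (y := q u₀) (z := q u)
      ⟨⟨mem_extChartAt_source (I := I) (q u), f1⟩, f0⟩]

end MFDerivSmooth
section LocalLift

variable {E H : Type*} [NormedAddCommGroup E] [NormedSpace ℝ E] [TopologicalSpace H]
  {I : ModelWithCorners ℝ E H}
  {M : Type*} [TopologicalSpace M] [ChartedSpace H M] [IsManifold I (⊤ : ℕ∞) M]
  {EJ HJ : Type*} [NormedAddCommGroup EJ] [NormedSpace ℝ EJ] [TopologicalSpace HJ]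
  {J : ModelWithCorners ℝ EJ HJ}
  {N : Type*} [TopologicalSpace N] [ChartedSpace HJ N] [IsManifold J (⊤ : ℕ∞) N]
  [FiniteDimensional ℝ E] [FiniteDimensional ℝ EJ]

/-- Coordinates (with respect to the chart at an arbitrary anchor point `x₀`) of a smooth
section along a map are smooth. -/
theorem contMDiffAt_tcc_of_sectionAlong' {q : N → M} {W : ∀ u : N, TangentSpace I (q u)}
    {x₀ : M} {u₁ : N} (hq : ContMDiffAt J I (⊤ : ℕ∞) q u₁) (hx : q u₁ ∈ (chartAt H x₀).source)
    (h : ContMDiffAt J (I.prod 𝓘(ℝ, E)) (⊤ : ℕ∞)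
      (fun u => (⟨q u, W u⟩ : TangentBundle I M)) u₁) :
    ContMDiffAt J 𝓘(ℝ, E) (⊤ : ℕ∞) (fun u => tangentCoordChange I (q u) x₀ (q u) (W u)) u₁ := by
  have h1 := contMDiffAt_tcc_of_sectionAlong (u₀ := u₁) h
  have hc : ContMDiffAt J 𝓘(ℝ, E →L[ℝ] E) (⊤ : ℕ∞) (fun u => tangentCoordChange I (q u₁) x₀ (q u)) u₁ :=
    (contMDiffAt_tangentCoordChange' (q u₁) x₀ (q u₁)
      ⟨mem_chart_source H (q u₁), hx⟩).comp u₁ hq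
  refine (hc.clm_apply h1).congr_of_eventuallyEq ?_
  have hqc : ContinuousAt q u₁ := hq.continuousAt
  filter_upwards [hqc.preimage_mem_nhds
      ((chartAt H (q u₁)).open_source.mem_nhds (mem_chart_source H (q u₁))),
    hqc.preimage_mem_nhds ((chartAt H x₀).open_source.mem_nhds hx)] with u h1' h2'
  have f1 : q u ∈ (extChartAt I (q u₁)).source := by rwa [extChartAt_source]
  have f2 : q u ∈ (extChartAt I x₀).source := by rwa [extChartAt_source]
  erw [tangentCoordChange_comp (w := q u) (x := q u₁) (y := x₀) (z := q u)
    ⟨⟨mem_extChartAt_source (I := I) (q u), f1⟩, f2⟩]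

/-- Local lift of a vector field along a submersion. -/
theorem exists_local_lift {q : N → M} (hq : ContMDiff J I (⊤ : ℕ∞) q) (hsub : IsSubmersion J I q)
    {W : VectorFieldOn I M} (hW : IsSmoothVF I W) (u₀ : N) :
    ∃ (O : Set N) (Y : VectorFieldOn J N), IsOpen O ∧ u₀ ∈ O ∧
      (∀ u ∈ O, ContMDiffAt J (J.prod 𝓘(ℝ, EJ)) (⊤ : ℕ∞)
        (fun v => (⟨v, Y v⟩ : TangentBundle J N)) u) ∧
      (∀ u ∈ O, mfderiv J I q u (Y u) = W (q u)) := by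
  classical
  set O₀ : Set N := (chartAt HJ u₀).source ∩ q ⁻¹' (chartAt H (q u₀)).source with hO₀def
  have hO₀ : IsOpen O₀ :=
    (chartAt HJ u₀).open_source.inter
      ((chartAt H (q u₀)).open_source.preimage hq.continuous)
  have hu₀O₀ : u₀ ∈ O₀ := ⟨mem_chart_source HJ u₀, mem_chart_source H (q u₀)⟩
  have hD : ∀ u ∈ O₀, ContMDiffAt J 𝓘(ℝ, EJ →L[ℝ] E) (⊤ : ℕ∞)
      (inTangentCoordinates J I id q (mfderiv J I q) u₀) u := fun u hu =>
    contMDiffAt_inTangentCoordinates_mfderiv hq u₀ hu.1 hu.2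
  have hsurj : Surjective (inTangentCoordinates J I id q (mfderiv J I q) u₀ u₀) := by
    rw [inTangentCoordinates_mfderiv_self]; exact hsub u₀
  obtain ⟨O₁, σ, hO₁, hu₀O₁, hO₁sub, hσsm, hσri⟩ :=
    exists_smooth_right_inverse hO₀ hu₀O₀ hD hsurj
  have hWcsm : ∀ u ∈ O₁, ContMDiffAt J 𝓘(ℝ, E) (⊤ : ℕ∞)
      (fun u => tangentCoordChange I (q u) (q u₀) (q u) (W (q u))) u := by
    intro u hu
    have hsec : ContMDiffAt J (I.prod 𝓘(ℝ, E)) (⊤ : ℕ∞)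
        (fun u => (⟨q u, W (q u)⟩ : TangentBundle I M)) u :=
      (hW (q u)).comp u (hq u)
    exact contMDiffAt_tcc_of_sectionAlong' (hq u) (hO₁sub hu).2 hsec
  refine ⟨O₁, fun u => tangentCoordChange J u₀ u u
    (σ u (tangentCoordChange I (q u) (q u₀) (q u) (W (q u)))), hO₁, hu₀O₁, ?_, ?_⟩
  · intro u hu
    refine isSmoothVFAt_of_coords (x₀ := u₀) hO₁ (fun v hv => (hO₁sub hv).1) hu
      ((hσsm u hu).clm_apply (hWcsm u hu)) (fun v _ => rfl)
  · intro u hu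
    have hu1 : u ∈ (chartAt HJ u₀).source := (hO₁sub hu).1
    have hu2 : q u ∈ (chartAt H (q u₀)).source := (hO₁sub hu).2
    have key := hσri u hu (tangentCoordChange I (q u) (q u₀) (q u) (W (q u)))
    rw [inTangentCoordinates_mfderiv_apply hu1 hu2] at key
    have hz : q u ∈ (extChartAt I (q u₀)).source := by rwa [extChartAt_source]
    have h2 := congrArg (tangentCoordChange I (q u₀) (q u) (q u)) key
    exact (tcc_cancel_right hz _).symm.trans (h2.trans (tcc_cancel_right hz _))

end LocalLift
section GlobalLift

variable {E H : Type*} [NormedAddCommGroup E] [NormedSpace ℝ E] [TopologicalSpace H]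
  {I : ModelWithCorners ℝ E H}
  {M : Type*} [TopologicalSpace M] [ChartedSpace H M] [IsManifold I (⊤ : ℕ∞) M]
  {EJ HJ : Type*} [NormedAddCommGroup EJ] [NormedSpace ℝ EJ] [TopologicalSpace HJ]
  {J : ModelWithCorners ℝ EJ HJ}
  {N : Type*} [TopologicalSpace N] [ChartedSpace HJ N] [IsManifold J (⊤ : ℕ∞) N]

theorem isSmoothVFAt_smul {f : N → ℝ} {X : VectorFieldOn J N} {x₀ : N}
    (hf : ContMDiffAt J 𝓘(ℝ) (⊤ : ℕ∞) f x₀)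
    (hX : ContMDiffAt J (J.prod 𝓘(ℝ, EJ)) (⊤ : ℕ∞) (fun x => (⟨x, X x⟩ : TangentBundle J N)) x₀) :
    ContMDiffAt J (J.prod 𝓘(ℝ, EJ)) (⊤ : ℕ∞) (fun x => (⟨x, f x • X x⟩ : TangentBundle J N)) x₀ := by
  rw [Bundle.contMDiffAt_section] at hX ⊢
  set e := trivializationAt EJ (TangentSpace J) x₀
  refine (hf.smul hX).congr_of_eventuallyEq ?_
  refine Filter.eventually_of_mem (e.open_baseSet.mem_nhds <|
    FiberBundle.mem_baseSet_trivializationAt EJ (TangentSpace J) x₀) ?_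
  intro x hx
  apply (e.linear ℝ hx).2

theorem isSmoothVFAt_of_eventually_zero {X : VectorFieldOn J N} {x₀ : N}
    (h : ∀ᶠ x in 𝓝 x₀, X x = 0) :
    ContMDiffAt J (J.prod 𝓘(ℝ, EJ)) (⊤ : ℕ∞) (fun x => (⟨x, X x⟩ : TangentBundle J N)) x₀ := by
  refine ((isSmoothVF_zero (I := J) (M := N)) x₀).congr_of_eventuallyEq ?_
  filter_upwards [h] with x hx
  rw [hx]
  rfl

variable [FiniteDimensional ℝ E] [FiniteDimensional ℝ EJ] [T2Space N] [SigmaCompactSpace N]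

/-- Global lift: given a submersion `q : N → M`, a smooth vector field `W` on `M` and
`f ∈ C_c^∞(N)`, there is `Z ∈ 𝔛_c(N)` with `dq(Z u) = f u • W (q u)` and support inside
the support of `f`. -/
theorem exists_global_lift {q : N → M} (hq : ContMDiff J I (⊤ : ℕ∞) q) (hsub : IsSubmersion J I q)
    {W : VectorFieldOn I M} (hW : IsSmoothVF I W) {f : N → ℝ} (hf : IsCcFn J f) :
    ∃ Z : VectorFieldOn J N, Z ∈ XC J ∧ suppVF J Z ⊆ tsupport f ∧
      ∀ u, mfderiv J I q u (Z u) = f u • W (q u) := by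
  classical
  have h := fun u : N => exists_local_lift (I := I) hq hsub hW u
  choose O Y hOopen hOmem hYsm hYder using h
  have hcov : tsupport f ⊆ ⋃ i : N, O i := fun u _ => Set.mem_iUnion.2 ⟨u, hOmem u⟩
  obtain ⟨t, ht⟩ := hf.2.elim_finite_subcover O hOopen hcov
  have hcov' : tsupport f ⊆ ⋃ i : {i // i ∈ t}, O i.1 := by
    intro u hu
    obtain ⟨i, hi, hiu⟩ := Set.mem_iUnion₂.mp (ht hu)
    exact Set.mem_iUnion.2 ⟨⟨i, hi⟩, hiu⟩
  obtain ⟨ρ, hρ⟩ := SmoothPartitionOfUnity.exists_isSubordinate J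
    (isClosed_tsupport f) (fun i : {i // i ∈ t} => O i.1) (fun i => hOopen i.1) hcov'
  set S : VectorFieldOn J N := fun u => ∑ i : {i // i ∈ t}, ρ i u • Y i.1 u with hSdef
  have hterm : ∀ i : {i // i ∈ t}, IsSmoothVF J (fun u => ρ i u • Y i.1 u) := by
    intro i u₁
    by_cases hu₁ : u₁ ∈ O i.1
    · exact isSmoothVFAt_smul ((ρ i).contMDiff u₁) (hYsm i.1 u₁ hu₁)
    · have hnot : u₁ ∉ tsupport (ρ i) := fun hc => hu₁ (hρ i hc)
      refine isSmoothVFAt_of_eventually_zero ?_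
      have := notMem_tsupport_iff_eventuallyEq.mp hnot
      filter_upwards [this] with x hx
      simp [hx]
  have hSsm : IsSmoothVF J S := by
    rw [hSdef]
    exact isSmoothVF_sum Finset.univ _ (fun i _ => hterm i)
  refine ⟨fun u => f u • S u, xc_smul hf hSsm, suppVF_smul_subset_tsupport f S, ?_⟩
  intro u
  have hlin : mfderiv J I q u (f u • S u)
      = f u • ∑ i : {i // i ∈ t}, ρ i u • mfderiv J I q u (Y i.1 u) := by
    rw [hSdef]
    rw [ContinuousLinearMap.map_smul]
    congr 1
    rw [map_sum]
    refine Finset.sum_congr rfl fun i _ => ?_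
    rw [ContinuousLinearMap.map_smul]
  rw [hlin]
  by_cases hfu : f u = 0
  · simp [hfu]
  · have huK : u ∈ tsupport f := subset_tsupport f (by simpa using hfu)
    have hsum : ∀ i : {i // i ∈ t}, i ∈ Finset.univ →
        ρ i u • mfderiv J I q u (Y i.1 u) = ρ i u • W (q u) := by
      intro i _
      by_cases hρu : ρ i u = 0
      · rw [hρu, zero_smul, zero_smul]
      · have : u ∈ tsupport (ρ i) := subset_tsupport _ (by simpa using hρu)
        rw [hYder i.1 u (hρ i this)]
    rw [Finset.sum_congr rfl hsum, ← Finset.sum_smul]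
    have h1 : ∑ i : {i // i ∈ t}, ρ i u = 1 := by
      rw [← finsum_eq_sum_of_fintype]
      exact ρ.sum_eq_one huK
    rw [h1, one_smul]

end GlobalLift
section KerFrame

variable {E H : Type*} [NormedAddCommGroup E] [NormedSpace ℝ E] [TopologicalSpace H]
  {I : ModelWithCorners ℝ E H}
  {M : Type*} [TopologicalSpace M] [ChartedSpace H M] [IsManifold I (⊤ : ℕ∞) M]
  {EJ HJ : Type*} [NormedAddCommGroup EJ] [NormedSpace ℝ EJ] [TopologicalSpace HJ]
  {J : ModelWithCorners ℝ EJ HJ}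
  {V : Type*} [TopologicalSpace V] [ChartedSpace HJ V] [IsManifold J (⊤ : ℕ∞) V]
  [FiniteDimensional ℝ E] [FiniteDimensional ℝ EJ]

/-- Around any point of the domain of a submersion `s : V → M` there is a smooth linear
family of local vector fields spanning the kernel of `ds`. -/
theorem exists_local_ker_frame {s : V → M} (hs : ContMDiff J I (⊤ : ℕ∞) s)
    (hsub : IsSubmersion J I s) (v₀ : V) :
    ∃ (O : Set V) (C : EJ → VectorFieldOn J V), IsOpen O ∧ v₀ ∈ O ∧
      O ⊆ (chartAt HJ v₀).source ∧
      (∀ v, IsLinearMap ℝ (fun w => C w v)) ∧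
      (∀ w, ∀ v ∈ O, ContMDiffAt J (J.prod 𝓘(ℝ, EJ)) (⊤ : ℕ∞)
        (fun v' => (⟨v', C w v'⟩ : TangentBundle J V)) v) ∧
      (∀ w, ∀ v ∈ O, mfderiv J I s v (C w v) = 0) ∧
      (∀ v ∈ O, ∀ x : TangentSpace J v, mfderiv J I s v x = 0 →
        C (tangentCoordChange J v v₀ v x) v = x) := by
  classical
  set O₀ : Set V := (chartAt HJ v₀).source ∩ s ⁻¹' (chartAt H (s v₀)).source with hO₀def
  have hO₀ : IsOpen O₀ :=
    (chartAt HJ v₀).open_source.inter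
      ((chartAt H (s v₀)).open_source.preimage hs.continuous)
  have hv₀O₀ : v₀ ∈ O₀ := ⟨mem_chart_source HJ v₀, mem_chart_source H (s v₀)⟩
  set D : V → EJ →L[ℝ] E := inTangentCoordinates J I id s (mfderiv J I s) v₀ with hDdef
  have hD : ∀ v ∈ O₀, ContMDiffAt J 𝓘(ℝ, EJ →L[ℝ] E) (⊤ : ℕ∞) D v := fun v hv =>
    contMDiffAt_inTangentCoordinates_mfderiv hs v₀ hv.1 hv.2
  have hsurj : Surjective (D v₀) := by
    rw [hDdef, inTangentCoordinates_mfderiv_self]; exact hsub v₀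
  obtain ⟨O₁, σ, hO₁, hv₀O₁, hO₁sub, hσsm, hσri⟩ :=
    exists_smooth_right_inverse hO₀ hv₀O₀ hD hsurj
  set P : V → EJ →L[ℝ] EJ := fun v => ContinuousLinearMap.id ℝ EJ - (σ v).comp (D v) with hPdef
  have hPker : ∀ v ∈ O₁, ∀ w, D v (P v w) = 0 := by
    intro v hv w
    simp only [hPdef, ContinuousLinearMap.sub_apply, ContinuousLinearMap.id_apply,
      ContinuousLinearMap.comp_apply, map_sub]
    rw [hσri v hv (D v w)]
    exact sub_self _
  have hPfix : ∀ v, ∀ w, D v w = 0 → P v w = w := by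
    intro v w hw
    simp only [hPdef, ContinuousLinearMap.sub_apply, ContinuousLinearMap.id_apply,
      ContinuousLinearMap.comp_apply, hw, map_zero, sub_zero]
  refine ⟨O₁, fun w v => tangentCoordChange J v₀ v v (P v w), hO₁, hv₀O₁,
    fun v hv => (hO₁sub hv).1, ?_, ?_, ?_, ?_⟩
  · intro v
    constructor
    · intro w₁ w₂
      show tangentCoordChange J v₀ v v (P v (w₁ + w₂))
        = tangentCoordChange J v₀ v v (P v w₁) + tangentCoordChange J v₀ v v (P v w₂)
      rw [map_add, map_add]
    · intro a w
      show tangentCoordChange J v₀ v v (P v (a • w)) = a • tangentCoordChange J v₀ v v (P v w)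
      rw [map_smul, map_smul]
  · intro w v hv
    have hPsm : ContMDiffAt J 𝓘(ℝ, EJ) (⊤ : ℕ∞) (fun v' => P v' w) v := by
      have h1 : ContMDiffAt J 𝓘(ℝ, EJ →L[ℝ] EJ) (⊤ : ℕ∞) P v := by
        refine ContMDiffAt.sub contMDiffAt_const ?_
        exact (hσsm v hv).clm_comp (hD v (hO₁sub hv))
      exact h1.clm_apply contMDiffAt_const
    exact isSmoothVFAt_of_coords hO₁ (fun v' hv' => (hO₁sub hv').1) hv hPsm (fun _ _ => rfl)
  · intro w v hv
    have h1 : v ∈ (chartAt HJ v₀).source := (hO₁sub hv).1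
    have h2 : s v ∈ (chartAt H (s v₀)).source := (hO₁sub hv).2
    have key : D v (P v w) = 0 := hPker v hv w
    rw [hDdef, inTangentCoordinates_mfderiv_apply h1 h2] at key
    have hz : s v ∈ (extChartAt I (s v₀)).source := by rwa [extChartAt_source]
    have h3 := congrArg (tangentCoordChange I (s v₀) (s v) (s v)) key
    exact (tcc_cancel_right hz _).symm.trans (h3.trans (map_zero _))
  · intro v hv x hx
    have h1 : v ∈ (chartAt HJ v₀).source := (hO₁sub hv).1
    have h2 : s v ∈ (chartAt H (s v₀)).source := (hO₁sub hv).2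
    have hzJ : v ∈ (extChartAt J v₀).source := by rwa [extChartAt_source]
    have hDx : D v (tangentCoordChange J v v₀ v x) = 0 := by
      rw [hDdef, inTangentCoordinates_mfderiv_apply h1 h2]
      erw [tcc_cancel_right hzJ, hx, map_zero]
    show tangentCoordChange J v₀ v v (P v (tangentCoordChange J v v₀ v x)) = x
    rw [hPfix v _ hDx]
    exact tcc_cancel_right hzJ x

end KerFrame
section Bump

variable {E H : Type*} [NormedAddCommGroup E] [NormedSpace ℝ E] [TopologicalSpace H]
  {I : ModelWithCorners ℝ E H} [FiniteDimensional ℝ E]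
  {M : Type*} [TopologicalSpace M] [ChartedSpace H M] [IsManifold I (⊤ : ℕ∞) M]
  [T2Space M] [SigmaCompactSpace M] [LocallyCompactSpace M]

theorem exists_cc_bump {K O : Set M} (hK : IsCompact K) (hO : IsOpen O) (hKO : K ⊆ O) :
    ∃ ψ : M → ℝ, IsCcFn I ψ ∧ Set.EqOn ψ 1 K ∧ tsupport ψ ⊆ O := by
  obtain ⟨L, hL, hKL, hLO⟩ := exists_compact_between hK hO hKO
  obtain ⟨f, hf0, hf1, _⟩ := exists_contMDiffMap_zero_one_of_isClosed I (n := (⊤ : ℕ∞))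
    (isOpen_interior.isClosed_compl) hK.isClosed
    (Set.disjoint_left.mpr fun x hx hxK => hx (hKL hxK))
  have hsupp : tsupport ⇑f ⊆ L := by
    have h1 : support ⇑f ⊆ interior L := by
      intro x hx
      by_contra hc
      exact hx (hf0 hc)
    exact closure_minimal (h1.trans interior_subset) hL.isClosed
  refine ⟨⇑f, ⟨f.contMDiff, hL.of_isClosed_subset (isClosed_tsupport _) hsupp⟩, hf1,
    hsupp.trans hLO⟩

end Bump

section GlobalDecomp

variable {E H : Type*} [NormedAddCommGroup E] [NormedSpace ℝ E] [TopologicalSpace H]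
  {I : ModelWithCorners ℝ E H}
  {M : Type*} [TopologicalSpace M] [ChartedSpace H M] [IsManifold I (⊤ : ℕ∞) M]
  {EJ HJ : Type*} [NormedAddCommGroup EJ] [NormedSpace ℝ EJ] [TopologicalSpace HJ]
  {J : ModelWithCorners ℝ EJ HJ}
  {V : Type*} [TopologicalSpace V] [ChartedSpace HJ V] [IsManifold J (⊤ : ℕ∞) V]
  {EU HU : Type*} [NormedAddCommGroup EU] [NormedSpace ℝ EU] [TopologicalSpace HU]
  {JU : ModelWithCorners ℝ EU HU}
  {U : Type*} [TopologicalSpace U] [ChartedSpace HU U] [IsManifold JU (⊤ : ℕ∞) U]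
  [FiniteDimensional ℝ E] [FiniteDimensional ℝ EJ] [FiniteDimensional ℝ EU]
  [T2Space V] [SigmaCompactSpace V] [LocallyCompactSpace V]

theorem exists_global_ker_decomp
    {s : V → M} (hs : ContMDiff J I (⊤ : ℕ∞) s) (hssub : IsSubmersion J I s)
    {p : U → V} (hp : ContMDiff JU J (⊤ : ℕ∞) p)
    {B : VectorFieldOn JU U} (hB : B ∈ XC JU)
    (hker : ∀ u, mfderiv J I s (p u) (mfderiv JU J p u (B u)) = 0) :
    ∃ (m : ℕ) (g : Fin m → U → ℝ) (C : Fin m → VectorFieldOn J V),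
      (∀ i, IsCcFn JU (g i)) ∧ (∀ i, C i ∈ KerGammaC J I s) ∧
      ∀ u, mfderiv JU J p u (B u) = ∑ i, g i u • C i (p u) := by
  classical
  set W : ∀ u : U, TangentSpace J (p u) := fun u => mfderiv JU J p u (B u) with hWdef
  have hWsec : ContMDiff JU (J.prod 𝓘(ℝ, EJ)) (⊤ : ℕ∞)
      (fun u => (⟨p u, W u⟩ : TangentBundle J V)) := by
    have h1 := (hp.contMDiff_tangentMap (m := (⊤ : ℕ∞)) (by simp)).comp hB.1
    exact h1
  have hWzero : ∀ u, B u = 0 → W u = 0 := by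
    intro u hu
    rw [hWdef]
    show mfderiv JU J p u (B u) = 0
    rw [hu]
    exact (mfderiv JU J p u).map_zero
  -- local kernel frames
  have hfr := fun v : V => exists_local_ker_frame (I := I) hs hssub v
  choose Ofr Cfr hOfrOpen hOfrMem hOfrChart hCfrLin hCfrSm hCfrKer hCfrRepr using hfr
  -- compact sets
  have hKcpt : IsCompact (suppVF JU B) := hB.2
  have hK' : IsCompact (p '' suppVF JU B) := hKcpt.image hp.continuous
  have hcov : p '' suppVF JU B ⊆ ⋃ v : V, Ofr v := fun v _ =>
    Set.mem_iUnion.2 ⟨v, hOfrMem v⟩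
  obtain ⟨t, ht⟩ := hK'.elim_finite_subcover Ofr hOfrOpen hcov
  set ι₀ := {i : V // i ∈ t} with hι₀def
  have hcov' : p '' suppVF JU B ⊆ ⋃ i : ι₀, Ofr i.1 := by
    intro v hv
    obtain ⟨i, hi, hiv⟩ := Set.mem_iUnion₂.mp (ht hv)
    exact Set.mem_iUnion.2 ⟨⟨i, hi⟩, hiv⟩
  obtain ⟨ρ, hρ⟩ := SmoothPartitionOfUnity.exists_isSubordinate J
    (hK'.isClosed) (fun i : ι₀ => Ofr i.1) (fun i => hOfrOpen i.1) hcov'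
  -- bump functions
  have hbump : ∀ i : ι₀, ∃ ψ : V → ℝ, IsCcFn J ψ ∧
      Set.EqOn ψ 1 (tsupport (ρ i) ∩ (p '' suppVF JU B)) ∧ tsupport ψ ⊆ Ofr i.1 := by
    intro i
    refine exists_cc_bump ?_ (hOfrOpen i.1) ?_
    · exact hK'.of_isClosed_subset ((isClosed_tsupport _).inter hK'.isClosed)
        Set.inter_subset_right
    · exact fun v hv => hρ i hv.1
  choose ψ hψcc hψone hψsupp using hbump
  -- basis of EJ
  set b := Module.finBasis ℝ EJ with hbdef
  set κ := Module.finrank ℝ EJ with hκdef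
  -- the data
  set g : ι₀ × Fin κ → U → ℝ := fun ij u => ρ ij.1 (p u) *
    (b.coord ij.2).toContinuousLinearMap
      (tangentCoordChange J (p u) ij.1.1 (p u) (W u)) with hgdef
  set C : ι₀ × Fin κ → VectorFieldOn J V := fun ij v => ψ ij.1 v • Cfr ij.1.1 (b ij.2) v
    with hCdef
  set e := Fintype.equivFin (ι₀ × Fin κ) with hedef
  have main : (∀ ij, IsCcFn JU (g ij)) → (∀ ij, C ij ∈ KerGammaC J I s) →
      (∀ u, mfderiv JU J p u (B u) = ∑ ij : ι₀ × Fin κ, g ij u • C ij (p u)) →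
      ∃ (m : ℕ) (g' : Fin m → U → ℝ) (C' : Fin m → VectorFieldOn J V),
        (∀ i, IsCcFn JU (g' i)) ∧ (∀ i, C' i ∈ KerGammaC J I s) ∧
        ∀ u, mfderiv JU J p u (B u) = ∑ i, g' i u • C' i (p u) := by
    intro h1 h2 h3
    refine ⟨Fintype.card (ι₀ × Fin κ), fun i => g (e.symm i), fun i => C (e.symm i),
      fun i => h1 _, fun i => h2 _, ?_⟩
    intro u
    rw [h3 u]
    exact (Equiv.sum_comp e.symm (fun ij => g ij u • C ij (p u))).symm
  refine main ?_ ?_ ?_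
  · -- g is Cc
    rintro ⟨i, j⟩
    constructor
    · -- smooth
      intro u₁
      by_cases hu₁ : p u₁ ∈ Ofr i.1
      · have hρsm : ContMDiffAt JU 𝓘(ℝ) (⊤ : ℕ∞) (fun u => ρ i (p u)) u₁ :=
          ((ρ i).contMDiff (p u₁)).comp u₁ (hp u₁)
        have htcc : ContMDiffAt JU 𝓘(ℝ, EJ) (⊤ : ℕ∞)
            (fun u => tangentCoordChange J (p u) i.1 (p u) (W u)) u₁ :=
          contMDiffAt_tcc_of_sectionAlong' (hp u₁) (hOfrChart i.1 hu₁) (hWsec u₁)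
        have hcoord : ContMDiffAt JU 𝓘(ℝ) (⊤ : ℕ∞) (fun u =>
            (b.coord j).toContinuousLinearMap
              (tangentCoordChange J (p u) i.1 (p u) (W u))) u₁ :=
          ContMDiffAt.clm_apply contMDiffAt_const htcc
        exact hρsm.mul hcoord
      · have hnot : p u₁ ∉ tsupport (ρ i) := fun hc => hu₁ (hρ i hc)
        have hev : ∀ᶠ u in nhds u₁, ρ i (p u) = 0 := by
          have h1 := notMem_tsupport_iff_eventuallyEq.mp hnot
          exact (hp u₁).continuousAt.eventually h1
        refine ContMDiffAt.congr_of_eventuallyEq (contMDiffAt_const (c := (0:ℝ))) ?_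
        filter_upwards [hev] with u hu
        rw [hgdef]
        show ρ i (p u) * _ = 0
        rw [hu, zero_mul]
    · -- compact support
      refine HasCompactSupport.intro' hKcpt isClosed_closure ?_
      intro u hu
      rw [hgdef]
      show ρ i (p u) * _ = 0
      have hBu : B u = 0 := by
        by_contra hc
        exact hu (subset_closure hc)
      rw [hWzero u hBu]
      simp
      right; erw [map_zero, map_zero, Finsupp.zero_apply]
  · -- C ∈ KerGammaC
    rintro ⟨i, j⟩
    refine ⟨⟨?_, ?_⟩, ?_⟩
    · -- smooth
      intro v₁
      by_cases hv₁ : v₁ ∈ Ofr i.1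
      · exact isSmoothVFAt_smul ((hψcc i).1 v₁) (hCfrSm i.1 (b j) v₁ hv₁)
      · have hnot : v₁ ∉ tsupport (ψ i) := fun hc => hv₁ (hψsupp i hc)
        refine isSmoothVFAt_of_eventually_zero ?_
        filter_upwards [notMem_tsupport_iff_eventuallyEq.mp hnot] with v hv
        show ψ i v • Cfr i.1 (b j) v = 0
        rw [hv]
        exact zero_smul ℝ _
    · -- compact support
      refine IsCptSuppVF.of_subset (hψcc i).2 ?_
      refine closure_minimal ?_ (isClosed_tsupport _)
      intro v hv
      simp only [Set.mem_setOf_eq] at hv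
      by_contra hc
      have : ψ i v = 0 := image_eq_zero_of_notMem_tsupport hc
      apply hv
      show ψ i v • Cfr i.1 (b j) v = 0
      rw [this]; exact zero_smul ℝ _
    · -- kernel
      intro v
      show mfderiv J I s v (ψ i v • Cfr i.1 (b j) v) = 0
      by_cases hv : v ∈ Ofr i.1
      · rw [(mfderiv J I s v).map_smul, hCfrKer i.1 (b j) v hv, smul_zero]
      · have : ψ i v = 0 := image_eq_zero_of_notMem_tsupport (fun hc => hv (hψsupp i hc))
        rw [this, zero_smul, (mfderiv J I s v).map_zero]
  · -- the sum identity
    intro u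
    show W u = ∑ ij : ι₀ × Fin κ, g ij u • C ij (p u)
    by_cases hBu : B u = 0
    · have h0 : ∀ ij : ι₀ × Fin κ, g ij u = 0 := by
        rintro ⟨i, j⟩
        rw [hgdef]
        show ρ i (p u) * _ = 0
        rw [hWzero u hBu]
        simp
        right; erw [map_zero, map_zero, Finsupp.zero_apply]
      rw [hWzero u hBu]
      refine (Finset.sum_eq_zero fun ij _ => ?_).symm
      rw [h0 ij, zero_smul]
    · have hpu : p u ∈ p '' suppVF JU B := ⟨u, subset_closure hBu, rfl⟩
      rw [Fintype.sum_prod_type]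
      have hterm : ∀ i : ι₀, ∑ j : Fin κ, g (i, j) u • C (i, j) (p u)
          = ρ i (p u) • W u := by
        intro i
        by_cases hρ0 : ρ i (p u) = 0
        · rw [hρ0, zero_smul]
          refine Finset.sum_eq_zero fun j _ => ?_
          have : g (i, j) u = 0 := by
            rw [hgdef]; show ρ i (p u) * _ = 0; rw [hρ0, zero_mul]
          rw [this, zero_smul]
        · have hmem : p u ∈ tsupport (ρ i) := subset_tsupport _ (by simpa using hρ0)
          have hOmem : p u ∈ Ofr i.1 := hρ i hmem
          have hψ1 : ψ i (p u) = 1 := hψone i ⟨hmem, hpu⟩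
          set xt : EJ := tangentCoordChange J (p u) i.1 (p u) (W u) with hxtdef
          have hsum : ∑ j : Fin κ, g (i, j) u • C (i, j) (p u)
              = ρ i (p u) • (Cfr i.1 xt (p u)) := by
            set L : EJ →ₗ[ℝ] TangentSpace J (p u) :=
              IsLinearMap.mk' (fun w => Cfr i.1 w (p u)) (hCfrLin i.1 (p u)) with hLdef
            have hL : ∀ w, Cfr i.1 w (p u) = L w := fun w => rfl
            calc ∑ j : Fin κ, g (i, j) u • C (i, j) (p u)
                = ∑ j : Fin κ, ρ i (p u) • (b.repr xt j • L (b j)) := by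
                  refine Finset.sum_congr rfl fun j _ => ?_
                  show (ρ i (p u) * (b.coord j).toContinuousLinearMap xt) •
                      (ψ i (p u) • Cfr i.1 (b j) (p u)) = _
                  rw [hψ1, one_smul, hL, LinearMap.coe_toContinuousLinearMap',
                    Module.Basis.coord_apply, mul_smul]
              _ = ρ i (p u) • L (∑ j : Fin κ, b.repr xt j • b j) := by
                  rw [← Finset.smul_sum]
                  congr 1
                  rw [map_sum]
                  refine Finset.sum_congr rfl fun j _ => ?_
                  rw [map_smul]
              _ = ρ i (p u) • (Cfr i.1 xt (p u)) := by
                  rw [Module.Basis.sum_repr]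
                  rfl
          rw [hsum, hxtdef, hCfrRepr i.1 (p u) hOmem (W u) (hker u)]
      have hc := Finset.sum_congr rfl (fun (i : ι₀) (_ : i ∈ Finset.univ) => hterm i)
      rw [hc, ← Finset.sum_smul]
      have h1 : ∑ i : ι₀, ρ i (p u) = 1 := by
        rw [← finsum_eq_sum_of_fintype]
        exact ρ.sum_eq_one hpu
      rw [h1, one_smul]

end GlobalDecomp
section SmallHelpers

variable {E H : Type*} [NormedAddCommGroup E] [NormedSpace ℝ E] [TopologicalSpace H]
  {I : ModelWithCorners ℝ E H}
  {M : Type*} [TopologicalSpace M] [ChartedSpace H M] [IsManifold I (⊤ : ℕ∞) M]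
  {E' H' : Type*} [NormedAddCommGroup E'] [NormedSpace ℝ E'] [TopologicalSpace H']
  {I' : ModelWithCorners ℝ E' H'}
  {M' : Type*} [TopologicalSpace M'] [ChartedSpace H' M'] [IsManifold I' (⊤ : ℕ∞) M']
  {E'' H'' : Type*} [NormedAddCommGroup E''] [NormedSpace ℝ E''] [TopologicalSpace H'']
  {I'' : ModelWithCorners ℝ E'' H''}
  {M'' : Type*} [TopologicalSpace M''] [ChartedSpace H'' M'']
  [IsManifold I'' (⊤ : ℕ∞) M'']

theorem mfderiv_comp_apply' {f : M → M'} {g : M' → M''} (hf : ContMDiff I I' (⊤ : ℕ∞) f)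
    (hg : ContMDiff I' I'' (⊤ : ℕ∞) g) (u : M) (x : TangentSpace I u) :
    mfderiv I I'' (g ∘ f) u x = mfderiv I' I'' g (f u) (mfderiv I I' f u x) := by
  rw [mfderiv_comp u (hg.mdifferentiableAt (by simp)) (hf.mdifferentiableAt (by simp))]
  rfl

theorem xc_neg {X : VectorFieldOn I M} (hX : X ∈ XC I) : (fun x => -X x) ∈ XC I := by
  have h1 : (fun x : M => -X x) = fun x => (-1 : ℝ) • X x := by
    funext x; rw [neg_one_smul]
  rw [h1]
  refine ⟨hX.1.smul (hf := contMDiff_const), ?_⟩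
  refine IsCptSuppVF.of_subset hX.2 ?_
  apply closure_mono
  intro x hx
  simp only [Set.mem_setOf_eq] at hx
  have : X x ≠ 0 := fun h => hx (by rw [h, smul_zero])
  exact this

theorem xc_sub {X Y : VectorFieldOn I M} (hX : X ∈ XC I) (hY : Y ∈ XC I) :
    (fun x => X x - Y x) ∈ XC I := by
  have h1 : (fun x : M => X x - Y x) = fun x => X x + (fun x => -Y x) x := by
    funext x; rw [sub_eq_add_neg]
  rw [h1]
  exact xc_add hX (xc_neg hY)

theorem isCcFn_mul_smooth {f g : M → ℝ} (hf : IsCcFn I f) (hg : IsSmoothFn I g) :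
    IsCcFn I (fun x => f x * g x) := by
  refine ⟨fun x => ((hf.1 x).mul (hg x)), ?_⟩
  refine HasCompactSupport.intro' hf.2 (isClosed_tsupport f) ?_
  intro x hx
  have : f x = 0 := image_eq_zero_of_notMem_tsupport hx
  rw [this, zero_mul]

theorem kerGammaC_zero {φ : M → M'} : (fun _ : M => (0 : E)) ∈ KerGammaC I I' φ :=
  ⟨xc_zero, fun u => (mfderiv I I' φ u).map_zero⟩

end SmallHelpers
section KeyPullback

variable {n k l : ℕ} {M V U : Type*}
  [TopologicalSpace M] [ChartedSpace (EuclideanSpace ℝ (Fin n)) M]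
  [IsManifold (𝓡 n) (⊤ : ℕ∞) M] [T2Space M] [SigmaCompactSpace M]
  [TopologicalSpace V] [ChartedSpace (EuclideanSpace ℝ (Fin k)) V]
  [IsManifold (𝓡 k) (⊤ : ℕ∞) V] [T2Space V] [SigmaCompactSpace V]
  [TopologicalSpace U] [ChartedSpace (EuclideanSpace ℝ (Fin l)) U]
  [IsManifold (𝓡 l) (⊤ : ℕ∞) U] [T2Space U] [SigmaCompactSpace U]

theorem setAddVF_comm (S T : Set (VectorFieldOn (𝓡 l) U)) :
    setAddVF (𝓡 l) S T = setAddVF (𝓡 l) T S := by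
  ext X
  constructor <;> rintro ⟨A, hA, B, hB, h⟩ <;>
    exact ⟨B, hB, A, hA, fun x => by rw [h x, add_comm]⟩

theorem isASBisubmersion_swap {F : Set (VectorFieldOn (𝓡 n) M)} {tV sV : V → M}
    (hbi : IsASBisubmersion (k := k) F tV sV) : IsASBisubmersion (k := k) F sV tV where
  smooth_t := hbi.smooth_s
  smooth_s := hbi.smooth_t
  subm_t := hbi.subm_s
  subm_s := hbi.subm_t
  pullback_t := by rw [hbi.pullback_s, setAddVF_comm]
  pullback_s := by rw [hbi.pullback_t, setAddVF_comm]

theorem key_pullback (F : Set (VectorFieldOn (𝓡 n) M)) (hFsub : F ⊆ XC (𝓡 n))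
    {tV sV : V → M} (hbi : IsASBisubmersion (k := k) F tV sV)
    {p : U → V} (hp : ContMDiff (𝓡 l) (𝓡 k) (⊤ : ℕ∞) p)
    (hpsub : IsSubmersion (𝓡 l) (𝓡 k) p) :
    PullbackModule (𝓡 l) (𝓡 n) (tV ∘ p) F
      = setAddVF (𝓡 l) (KerGammaC (𝓡 l) (𝓡 n) (tV ∘ p))
          (KerGammaC (𝓡 l) (𝓡 n) (sV ∘ p)) := by
  have htU : ContMDiff (𝓡 l) (𝓡 n) (⊤ : ℕ∞) (tV ∘ p) := hbi.smooth_t.comp hp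
  have hsU : ContMDiff (𝓡 l) (𝓡 n) (⊤ : ℕ∞) (sV ∘ p) := hbi.smooth_s.comp hp
  haveI : LocallyCompactSpace V := Manifold.locallyCompact_of_finiteDimensional (𝓡 k)
  ext X
  constructor
  · -- hard direction: an element of the pullback module splits
    rintro ⟨hXxc, m, f, Y, hf, hY, hder⟩
    have hKcpt : IsCompact (⋃ i, p '' tsupport (f i)) :=
      isCompact_iUnion fun i => ((hf i).2).image hp.continuous
    obtain ⟨χ, hχcc, hχ1, -⟩ := exists_cc_bump (I := 𝓡 k) hKcpt isOpen_univ (Set.subset_univ _)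
    have hstep : ∀ i : Fin m, ∃ Bhat : VectorFieldOn (𝓡 l) U,
        Bhat ∈ KerGammaC (𝓡 l) (𝓡 n) (sV ∘ p) ∧
        ∀ u, mfderiv (𝓡 l) (𝓡 n) (tV ∘ p) u (Bhat u)
          = f i u • (χ (p u) • Y i (tV (p u))) := by
      intro i
      have hYsm : IsSmoothVF (𝓡 n) (Y i) := (hFsub (hY i)).1
      obtain ⟨Z, hZxc, hZsupp, hZder⟩ :=
        exists_global_lift hbi.smooth_t hbi.subm_t hYsm hχcc
      have hZmem : Z ∈ PullbackModule (𝓡 k) (𝓡 n) tV F := by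
        refine ⟨hZxc, 1, fun _ => χ, fun _ => Y i, fun _ => hχcc, fun _ => hY i, ?_⟩
        intro v
        rw [hZder v, Fin.sum_univ_one]
      rw [hbi.pullback_t] at hZmem
      obtain ⟨A, hA, B, hB, hABZ⟩ := hZmem
      obtain ⟨Bhat, hBhatxc, hBhatsupp, hBhatder⟩ := exists_global_lift hp hpsub hB.1.1 (hf i)
      refine ⟨Bhat, ⟨hBhatxc, ?_⟩, ?_⟩
      · intro u
        rw [mfderiv_comp_apply' hp hbi.smooth_s, hBhatder u,
          (mfderiv (𝓡 k) (𝓡 n) sV (p u)).map_smul, hB.2 (p u), smul_zero]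
      · intro u
        rw [mfderiv_comp_apply' hp hbi.smooth_t, hBhatder u,
          (mfderiv (𝓡 k) (𝓡 n) tV (p u)).map_smul]
        have hB' : B (p u) = Z (p u) - A (p u) := by
          rw [hABZ (p u)]
          exact (add_sub_cancel_left _ _).symm
        rw [hB', (mfderiv (𝓡 k) (𝓡 n) tV (p u)).map_sub, hZder (p u), hA.2 (p u), sub_zero]
    choose Bhat hBhatker hBhatder using hstep
    have hBsumKer : (fun u => ∑ i, Bhat i u) ∈ KerGammaC (𝓡 l) (𝓡 n) (sV ∘ p) := by
      refine ⟨xc_sum Finset.univ _ (fun i _ => (hBhatker i).1), ?_⟩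
      intro u
      show mfderiv (𝓡 l) (𝓡 n) (sV ∘ p) u (∑ i, Bhat i u) = 0
      rw [map_sum]
      exact Finset.sum_eq_zero fun i _ => (hBhatker i).2 u
    refine ⟨fun u => X u - ∑ i, Bhat i u, ⟨xc_sub hXxc hBsumKer.1, ?_⟩,
      fun u => ∑ i, Bhat i u, hBsumKer, fun u => (sub_add_cancel _ _).symm⟩
    intro u
    show mfderiv (𝓡 l) (𝓡 n) (tV ∘ p) u (X u - ∑ i, Bhat i u) = 0
    rw [(mfderiv (𝓡 l) (𝓡 n) (tV ∘ p) u).map_sub, hder u, map_sum]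
    have h2 : ∀ i : Fin m, i ∈ Finset.univ →
        mfderiv (𝓡 l) (𝓡 n) (tV ∘ p) u (Bhat i u) = f i u • Y i ((tV ∘ p) u) := by
      intro i _
      rw [hBhatder i u]
      by_cases hfu : f i u = 0
      · rw [hfu, zero_smul, zero_smul]
      · have hu : u ∈ tsupport (f i) := subset_tsupport _ (by simpa using hfu)
        have hχpu : χ (p u) = 1 := hχ1 (Set.mem_iUnion.2 ⟨i, ⟨u, hu, rfl⟩⟩)
        rw [hχpu, one_smul]
        rfl
    rw [Finset.sum_congr rfl h2, sub_self]
  · -- easy direction: a sum of kernel fields lies in the pullback module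
    rintro ⟨A, hA, B, hB, hAB⟩
    have hXfun : X = fun x => A x + B x := funext hAB
    have hXxc : X ∈ XC (𝓡 l) := by rw [hXfun]; exact xc_add hA.1 hB.1
    have hkerB : ∀ u, mfderiv (𝓡 k) (𝓡 n) sV (p u) (mfderiv (𝓡 l) (𝓡 k) p u (B u)) = 0 := by
      intro u
      have h1 := hB.2 u
      rwa [mfderiv_comp_apply' hp hbi.smooth_s] at h1
    obtain ⟨m, g, C, hg, hC, hrep⟩ :=
      exists_global_ker_decomp hbi.smooth_s hbi.subm_s hp hB.1 hkerB
    have hCmem : ∀ i, C i ∈ PullbackModule (𝓡 k) (𝓡 n) tV F := by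
      intro i
      rw [hbi.pullback_t]
      exact ⟨(fun _ => 0), kerGammaC_zero, C i, hC i, fun v => (zero_add _).symm⟩
    choose mm h Yf hh hYf hde using fun i => (hCmem i).2
    refine ⟨hXxc, ?_⟩
    classical
    refine ⟨Fintype.card ((i : Fin m) × Fin (mm i)),
      fun a u => g ((Fintype.equivFin ((i : Fin m) × Fin (mm i))).symm a).1 u
        * h ((Fintype.equivFin _).symm a).1 ((Fintype.equivFin _).symm a).2 (p u),
      fun a => Yf ((Fintype.equivFin ((i : Fin m) × Fin (mm i))).symm a).1
        ((Fintype.equivFin _).symm a).2, ?_, ?_, ?_⟩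
    · intro a
      exact isCcFn_mul_smooth (hg _) (fun u => ((hh _ _).1 (p u)).comp u (hp u))
    · intro a
      exact hYf _ _
    · intro u
      have h1 : mfderiv (𝓡 l) (𝓡 n) (tV ∘ p) u (X u)
          = mfderiv (𝓡 k) (𝓡 n) tV (p u) (mfderiv (𝓡 l) (𝓡 k) p u (B u)) := by
        rw [hXfun]
        show mfderiv (𝓡 l) (𝓡 n) (tV ∘ p) u (A u + B u) = _
        rw [(mfderiv (𝓡 l) (𝓡 n) (tV ∘ p) u).map_add, hA.2 u, zero_add,
          mfderiv_comp_apply' hp hbi.smooth_t]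
      rw [h1, hrep u, map_sum]
      have h2 : ∀ i : Fin m, i ∈ Finset.univ →
          mfderiv (𝓡 k) (𝓡 n) tV (p u) (g i u • C i (p u))
          = ∑ j : Fin (mm i), (g i u * h i j (p u)) • Yf i j (tV (p u)) := by
        intro i _
        rw [(mfderiv (𝓡 k) (𝓡 n) tV (p u)).map_smul, hde i (p u), Finset.smul_sum]
        refine Finset.sum_congr rfl fun j _ => ?_
        rw [smul_smul]
      rw [Finset.sum_congr rfl h2]
      have h3 : ∑ i : Fin m, ∑ j : Fin (mm i), (g i u * h i j (p u)) • Yf i j (tV (p u))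
          = ∑ a : (i : Fin m) × Fin (mm i), (g a.1 u * h a.1 a.2 (p u)) • Yf a.1 a.2 (tV (p u)) := by
        rw [← Finset.univ_sigma_univ, Finset.sum_sigma]
      rw [h3]
      exact (Equiv.sum_comp (Fintype.equivFin ((i : Fin m) × Fin (mm i))).symm
        (fun a => (g a.1 u * h a.1 a.2 (p u)) • Yf a.1 a.2 (tV (p u)))).symm

end KeyPullback
/-- precomposing a bisubmersion with a submersion yields a
bisubmersion. -/
theorem statement_7
    {n k l : ℕ} {M V U : Type*}
    [TopologicalSpace M] [ChartedSpace (EuclideanSpace ℝ (Fin n)) M]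
    [IsManifold (𝓡 n) (⊤ : ℕ∞) M] [T2Space M] [SigmaCompactSpace M]
    [TopologicalSpace V] [ChartedSpace (EuclideanSpace ℝ (Fin k)) V]
    [IsManifold (𝓡 k) (⊤ : ℕ∞) V] [T2Space V] [SigmaCompactSpace V]
    [TopologicalSpace U] [ChartedSpace (EuclideanSpace ℝ (Fin l)) U]
    [IsManifold (𝓡 l) (⊤ : ℕ∞) U] [T2Space U] [SigmaCompactSpace U]
    (F : Set (VectorFieldOn (𝓡 n) M)) (hF : IsSingularFoliation F)
    (tV sV : V → M) (hbi : IsASBisubmersion (k := k) F tV sV)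
    (p : U → V) (hp : ContMDiff (𝓡 l) (𝓡 k) (⊤ : ℕ∞) p)
    (hpsub : IsSubmersion (𝓡 l) (𝓡 k) p) :
    IsASBisubmersion (k := l) F (tV ∘ p) (sV ∘ p) := by
  have hFsub : F ⊆ XC (𝓡 n) := hF.submodule.subset_XC
  refine ⟨hbi.smooth_t.comp hp, hbi.smooth_s.comp hp, ?_, ?_, ?_, ?_⟩
  · intro u
    rw [mfderiv_comp u (hbi.smooth_t.mdifferentiableAt (by simp)) (hp.mdifferentiableAt (by simp))]
    exact (hbi.subm_t (p u)).comp (hpsub u)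
  · intro u
    rw [mfderiv_comp u (hbi.smooth_s.mdifferentiableAt (by simp)) (hp.mdifferentiableAt (by simp))]
    exact (hbi.subm_s (p u)).comp (hpsub u)
  · exact key_pullback F hFsub hbi hp hpsub
  · rw [key_pullback F hFsub (isASBisubmersion_swap hbi) hp hpsub, setAddVF_comm]

end
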